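/- For every integer p ≥ 2, the function v₂(τ) = (1+τ)^{p+2}(1−τ)^{p−2}·I₋(τ) satisfies (1−τ²)·v₂''(τ) + (−4 + 2(p−1)τ)·v₂'(τ) + 2p·v₂(τ) = 0 for all τ ∈ (−1,1); i.e. it is a second, linearly independent solution of the homogeneous a₄-equation in the sector q = p. -/

import Mathlib

open intervalIntegral

/-- The integral `I₋(τ) = ∫₀^τ (1−s)^{−(p−1)} (1+s)^{−(p+3)} ds`. -/
noncomputable def Iminus (p : ℕ) (τ : ℝ) : ℝ :=
  ∫ s in (0 : ℝ)..τ, 1 / ((1 - s) ^ (p - 1) * (1 + s) ^ (p + 3))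

lemma hasDerivAt_Iminus (m : ℕ) {τ : ℝ} (hτ : τ ∈ Set.Ioo (-1 : ℝ) 1) :
    HasDerivAt (Iminus (m + 2)) (1 / ((1 - τ) ^ (m + 1) * (1 + τ) ^ (m + 5))) τ := by
  set f : ℝ → ℝ := fun s => 1 / ((1 - s) ^ (m + 1) * (1 + s) ^ (m + 5)) with hf
  have hne : ∀ s ∈ Set.Ioo (-1 : ℝ) 1, (1 - s) ^ (m + 1) * (1 + s) ^ (m + 5) ≠ 0 := by
    intro s hs
    have h1 : (0:ℝ) < 1 - s := by linarith [hs.2]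
    have h2 : (0:ℝ) < 1 + s := by linarith [hs.1]
    positivity
  have hfc : ContinuousOn f (Set.Ioo (-1 : ℝ) 1) := by
    apply ContinuousOn.div continuousOn_const
    · exact (Continuous.continuousOn (by continuity))
    · exact hne
  have h0 : (0:ℝ) ∈ Set.Ioo (-1 : ℝ) 1 := by norm_num
  have hsub : Set.uIcc (0:ℝ) τ ⊆ Set.Ioo (-1 : ℝ) 1 :=
    Set.ordConnected_Ioo.uIcc_subset h0 hτ
  have hint : IntervalIntegrable f MeasureTheory.volume 0 τ :=
    (hfc.mono hsub).intervalIntegrable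
  have hmeas : StronglyMeasurableAtFilter f (nhds τ) :=
    hfc.stronglyMeasurableAtFilter isOpen_Ioo τ hτ
  have hcont : ContinuousAt f τ := hfc.continuousAt (isOpen_Ioo.mem_nhds hτ)
  have key : HasDerivAt (fun x => ∫ s in (0:ℝ)..x, f s) (f τ) τ :=
    intervalIntegral.integral_hasDerivAt_right hint hmeas hcont
  have : Iminus (m + 2) = fun x => ∫ s in (0:ℝ)..x, f s := by
    funext x
    simp only [Iminus, hf, show m + 2 - 1 = m + 1 by omega, show m + 2 + 3 = m + 5 by omega]
  rw [this]
  exact key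

lemma hasDerivAt_one_add (t : ℝ) : HasDerivAt (fun t : ℝ => 1 + t) 1 t :=
  (hasDerivAt_id t).const_add 1

lemma hasDerivAt_one_sub (t : ℝ) : HasDerivAt (fun t : ℝ => 1 - t) (-1) t :=
  (hasDerivAt_id t).const_sub 1

lemma hasDerivAt_ab (a b : ℕ) (t : ℝ) :
    HasDerivAt (fun t : ℝ => (1 + t) ^ a * (1 - t) ^ b)
      ((a : ℝ) * (1 + t) ^ (a - 1) * (1 - t) ^ b - (b : ℝ) * (1 + t) ^ a * (1 - t) ^ (b - 1)) t := by
  have h := ((hasDerivAt_one_add t).fun_pow a).fun_mul ((hasDerivAt_one_sub t).fun_pow b)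
  refine h.congr_deriv ?_
  ring

lemma hasDerivAt_inv2 (τ : ℝ) (h1 : 1 - τ ≠ 0) (h2 : 1 + τ ≠ 0) :
    HasDerivAt (fun t : ℝ => 1 / ((1 - t) * (1 + t)))
      ((2 * τ) / (((1 - τ) * (1 + τ)) ^ 2)) τ := by
  have hd : HasDerivAt (fun t : ℝ => (1 - t) * (1 + t)) ((-1) * (1 + τ) + (1 - τ) * 1) τ :=
    (hasDerivAt_one_sub τ).mul (hasDerivAt_one_add τ)
  have h := (hasDerivAt_const τ (1:ℝ)).fun_div hd (mul_ne_zero h1 h2)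
  refine h.congr_deriv ?_
  field_simp
  ring

theorem stmt_3 (p : ℕ) (hp : 2 ≤ p) :
    ∀ τ ∈ Set.Ioo (-1 : ℝ) 1,
      (1 - τ ^ 2) *
          deriv (deriv (fun t : ℝ => (1 + t) ^ (p + 2) * (1 - t) ^ (p - 2) * Iminus p t)) τ
        + (-4 + 2 * ((p : ℝ) - 1) * τ) *
            deriv (fun t : ℝ => (1 + t) ^ (p + 2) * (1 - t) ^ (p - 2) * Iminus p t) τ
        + 2 * (p : ℝ) * ((1 + τ) ^ (p + 2) * (1 - τ) ^ (p - 2) * Iminus p τ) = 0 := by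
  obtain ⟨m, rfl⟩ : ∃ m, p = m + 2 := ⟨p - 2, by omega⟩
  intro τ hτ
  have h1 : (0:ℝ) < 1 - τ := by linarith [hτ.2]
  have h2 : (0:ℝ) < 1 + τ := by linarith [hτ.1]
  simp only [show m + 2 + 2 = m + 4 by omega, show m + 2 - 2 = m by omega]
  -- first derivative of v, valid on all of Ioo
  have hv : ∀ t ∈ Set.Ioo (-1:ℝ) 1,
      HasDerivAt (fun t : ℝ => (1 + t) ^ (m + 4) * (1 - t) ^ m * Iminus (m + 2) t)
        (((m:ℝ) + 4) * ((1 + t) ^ (m + 3) * (1 - t) ^ m) * Iminus (m + 2) t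
          - (m:ℝ) * ((1 + t) ^ (m + 4) * (1 - t) ^ (m - 1)) * Iminus (m + 2) t
          + 1 / ((1 - t) * (1 + t))) t := by
    intro t ht
    have h1t : (0:ℝ) < 1 - t := by linarith [ht.2]
    have h2t : (0:ℝ) < 1 + t := by linarith [ht.1]
    have h := (hasDerivAt_ab (m + 4) m t).fun_mul (hasDerivAt_Iminus m ht)
    have hgf : (1 + t) ^ (m + 4) * (1 - t) ^ m * (1 / ((1 - t) ^ (m + 1) * (1 + t) ^ (m + 5)))
        = 1 / ((1 - t) * (1 + t)) := by
      rw [mul_one_div, div_eq_div_iff (by positivity) (by positivity)]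
      ring
    rw [hgf] at h
    refine h.congr_deriv ?_
    push_cast [show m + 4 - 1 = m + 3 by omega]
    ring
  -- the explicit first-derivative function W
  set W : ℝ → ℝ := fun t =>
    (((m:ℝ) + 4) * ((1 + t) ^ (m + 3) * (1 - t) ^ m)
      - (m:ℝ) * ((1 + t) ^ (m + 4) * (1 - t) ^ (m - 1))) * Iminus (m + 2) t
      + 1 / ((1 - t) * (1 + t)) with hW
  have hEv : deriv (fun t : ℝ => (1 + t) ^ (m + 4) * (1 - t) ^ m * Iminus (m + 2) t)
      =ᶠ[nhds τ] W := by
    filter_upwards [isOpen_Ioo.mem_nhds hτ] with t ht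
    have := (hv t ht).deriv
    rw [this, hW]
    ring
  -- derivative of W
  have hG1 : HasDerivAt (fun t : ℝ =>
      ((m:ℝ) + 4) * ((1 + t) ^ (m + 3) * (1 - t) ^ m)
        - (m:ℝ) * ((1 + t) ^ (m + 4) * (1 - t) ^ (m - 1)))
      (((m:ℝ) + 4) * ((↑(m+3) : ℝ) * (1 + τ) ^ (m + 3 - 1) * (1 - τ) ^ m
          - (m:ℝ) * (1 + τ) ^ (m + 3) * (1 - τ) ^ (m - 1))
        - (m:ℝ) * ((↑(m+4) : ℝ) * (1 + τ) ^ (m + 4 - 1) * (1 - τ) ^ (m - 1)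
          - (↑(m-1) : ℝ) * (1 + τ) ^ (m + 4) * (1 - τ) ^ (m - 1 - 1))) τ :=
    ((hasDerivAt_ab (m + 3) m τ).const_mul _).sub ((hasDerivAt_ab (m + 4) (m - 1) τ).const_mul _)
  have hD := (hG1.mul (hasDerivAt_Iminus m hτ)).add (hasDerivAt_inv2 τ h1.ne' h2.ne')
  have hd2 : deriv (deriv (fun t : ℝ => (1 + t) ^ (m + 4) * (1 - t) ^ m * Iminus (m + 2) t)) τ
      = _ := hEv.deriv_eq.trans hD.deriv
  rw [hd2, (hv τ hτ).deriv]
  -- now pure algebra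
  push_cast [show m + 3 - 1 = m + 2 by omega, show m + 4 - 1 = m + 3 by omega,
    show m - 1 - 1 = m - 2 by omega]
  rcases m with _ | _ | k
  · norm_num
    field_simp
    ring
  · norm_num
    field_simp
    ring
  · simp only [show k + 2 - 1 = k + 1 by omega, show k + 2 - 2 = k by omega]
    push_cast
    field_simp
    ring
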